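/- Let K be a countable family of infinite subsets of a countable infinite set a such that no finite subfamily of K covers a modulo a finite set. Then there exists an infinite h ⊆ a such that h ∩ K is finite for every K ∈ K. -/

import Mathlib

universe u

/-- Let `K` be a countable family of infinite subsets of a countably infinite
set `a` such that no finite subfamily of `K` covers `a` modulo a finite set.
Then there is an infinite `h ⊆ a` meeting each member of `K` in a finite set. -/
theorem stmt19 {α : Type u} (a : Set α) (hac : a.Countable) (hai : a.Infinite)
    (K : Set (Set α)) (hKc : K.Countable)
    (hKmem : ∀ k ∈ K, k ⊆ a ∧ k.Infinite)
    (hncov : ∀ K' : Finset (Set α), ↑K' ⊆ K → (a \ ⋃₀ ↑K').Infinite) :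
    ∃ h : Set α, h ⊆ a ∧ h.Infinite ∧ ∀ k ∈ K, (h ∩ k).Finite := by
  classical
  rcases K.eq_empty_or_nonempty with hK | hKne
  · exact ⟨a, subset_rfl, hai, by simp [hK]⟩
  obtain ⟨f, hf⟩ := hKc.exists_eq_range hKne
  -- S n : what's left after removing the first n+1 sets
  set S : ℕ → Set α := fun n => a \ ⋃₀ ↑((Finset.range (n+1)).image f) with hSdef
  have hS : ∀ n, (S n).Infinite := by
    intro n
    apply hncov
    intro k hk
    simp only [Finset.coe_image, Set.mem_image] at hk
    obtain ⟨i, _, rfl⟩ := hk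
    rw [hf]; exact ⟨i, rfl⟩
  have key : ∀ n (l : List α), ∃ y, y ∈ S n ∧ y ∉ l := by
    intro n l
    obtain ⟨y, hy⟩ := ((hS n).diff l.finite_toSet).nonempty
    exact ⟨y, hy.1, hy.2⟩
  let g : ℕ → List α := fun n => Nat.rec [] (fun m L => (key m L).choose :: L) n
  let x : ℕ → α := fun n => (key n (g n)).choose
  have hgsucc : ∀ n, g (n+1) = x n :: g n := fun n => rfl
  have hxS : ∀ n, x n ∈ S n := fun n => (key n (g n)).choose_spec.1
  have hxg : ∀ n, x n ∉ g n := fun n => (key n (g n)).choose_spec.2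
  have hmono : ∀ m n, m ≤ n → ∀ y, y ∈ g m → y ∈ g n := by
    intro m n hmn
    induction n with
    | zero => intro y hy; rwa [Nat.le_zero.mp hmn] at hy
    | succ n ih =>
      intro y hy
      rcases Nat.eq_or_lt_of_le hmn with h | h
      · exact h ▸ hy
      · rw [hgsucc]
        exact List.mem_cons_of_mem _ (ih (Nat.lt_succ_iff.mp h) y hy)
  have hxgmem : ∀ m n, m < n → x m ∈ g n := by
    intro m n hmn
    have : x m ∈ g (m+1) := by rw [hgsucc]; exact List.mem_cons_self
    exact hmono (m+1) n hmn _ this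
  have hinj : Function.Injective x := by
    intro m n hmn
    by_contra hne
    rcases Nat.lt_or_ge m n with h | h
    · exact hxg n (hmn ▸ hxgmem m n h)
    · have h' : n < m := lt_of_le_of_ne h (Ne.symm hne)
      exact hxg m (hmn ▸ hxgmem n m h')
  have hxa : ∀ n, x n ∈ a := fun n => (hxS n).1
  have hxnotf : ∀ m n, m ≤ n → x n ∉ f m := by
    intro m n hmn hmem
    apply (hxS n).2
    refine ⟨f m, ?_, hmem⟩
    simp only [Finset.coe_image, Set.mem_image]
    exact ⟨m, Finset.mem_coe.mpr (Finset.mem_range.mpr (Nat.lt_succ_of_le hmn)), rfl⟩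
  refine ⟨Set.range x, ?_, ?_, ?_⟩
  · rintro y ⟨n, rfl⟩; exact hxa n
  · exact Set.infinite_range_of_injective hinj
  · intro k hk
    rw [hf] at hk
    obtain ⟨m, rfl⟩ := hk
    have hsub : Set.range x ∩ f m ⊆ x '' {n | n < m} := by
      rintro y ⟨⟨n, rfl⟩, hyf⟩
      refine ⟨n, ?_, rfl⟩
      by_contra h
      simp only [Set.mem_setOf_eq, not_lt] at h
      exact hxnotf m n h hyf
    exact ((Set.finite_Iio m).image x).subset (by simpa [Set.Iio] using hsub)
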